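/- Let J ⊆ ℤ be finite with d := max(J) - min(J) - 1 ≥ 1, and let {V_i}_{i∈ℤ} be vectors in ℝ^{d+1} such that for each i the vectors {V_{i+j} : j ∈ J} satisfy a nontrivial linear relation Σ_{j∈J} a^(j)_i V_{i+j} = 0 with all coefficients a^(j)_i nonzero. Suppose J = J_- ⊔ J_+ is a partition with |J_-|, |J_+| ≥ 1 and that for each i the families {V_{i+j} : j ∈ J_-} and {V_{i+j} : j ∈ J_+} are each linearly independent. Then for each i, the subspace span{V_{i+j} : j ∈ J_-} ∩ span{V_{i+j} : j ∈ J_+} has dimension exactly 1. -/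

import Mathlib

open Module Submodule

lemma span_image_finrank {n : ℕ} (K : Finset ℤ) (f : ℤ → (Fin n → ℝ))
    (h : LinearIndependent ℝ (fun j : ↥K => f (j : ℤ))) :
    Module.finrank ℝ (Submodule.span ℝ (f '' (K : Set ℤ))) = K.card := by
  have : f '' (K : Set ℤ) = Set.range (fun j : ↥K => f (j : ℤ)) := by
    ext x; simp
  rw [this, finrank_span_eq_card h, Fintype.card_coe]

/-- Well-definedness of the pentagram map associated to a partition `J = J₋ ⊔ J₊`:
if the vectors `{V_{i+j} : j ∈ J}` in `ℝ^{d+1}` (with `d = max J - min J - 1`) satisfy a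
linear relation with all coefficients nonzero, and every proper subfamily is linearly
independent (in particular the `J₋`- and `J₊`-subfamilies are), then
`span{V_{i+j} : j ∈ J₋} ∩ span{V_{i+j} : j ∈ J₊}` is one-dimensional. -/
theorem pentagram_intersection_dim_one (J Jm Jp : Finset ℤ) (hJ : J.Nonempty)
    (d : ℕ) (hd : 1 ≤ d) (hdval : (J.max' hJ - J.min' hJ - 1 : ℤ) = d)
    (V : ℤ → (Fin (d + 1) → ℝ)) (a : ℤ → ℤ → ℝ)
    (hrel : ∀ i : ℤ, ∑ j ∈ J, a j i • V (i + j) = 0)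
    (hnz : ∀ j ∈ J, ∀ i : ℤ, a j i ≠ 0)
    (hpart : Jm ∪ Jp = J) (hdisj : Disjoint Jm Jp)
    (hm : Jm.Nonempty) (hp : Jp.Nonempty)
    (hind : ∀ K : Finset ℤ, K ⊆ J → K ≠ J → ∀ i : ℤ,
      LinearIndependent ℝ (fun j : ↥K => V (i + (j : ℤ)))) :
    ∀ i : ℤ, Module.finrank ℝ
      ↥(Submodule.span ℝ ((fun j : ℤ => V (i + j)) '' (Jm : Set ℤ)) ⊓
        Submodule.span ℝ ((fun j : ℤ => V (i + j)) '' (Jp : Set ℤ))) = 1 := by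
  intro i
  set f : ℤ → (Fin (d + 1) → ℝ) := fun j => V (i + j) with hf
  -- Jm and Jp are proper subsets of J
  have hJmJ : Jm ⊆ J := hpart ▸ Finset.subset_union_left
  have hJpJ : Jp ⊆ J := hpart ▸ Finset.subset_union_right
  have hJmne : Jm ≠ J := by
    intro h
    obtain ⟨x, hx⟩ := hp
    exact (Finset.disjoint_left.mp hdisj (h ▸ hJpJ hx) hx)
  have hJpne : Jp ≠ J := by
    intro h
    obtain ⟨x, hx⟩ := hm
    exact (Finset.disjoint_left.mp hdisj hx (h ▸ hJmJ hx))
  have hrm : Module.finrank ℝ (Submodule.span ℝ (f '' (Jm : Set ℤ))) = Jm.card :=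
    span_image_finrank Jm f (hind Jm hJmJ hJmne i)
  have hrp : Module.finrank ℝ (Submodule.span ℝ (f '' (Jp : Set ℤ))) = Jp.card :=
    span_image_finrank Jp f (hind Jp hJpJ hJpne i)
  -- span of the full family has rank |J| - 1
  obtain ⟨j₀, hj₀⟩ := hJ
  set K : Finset ℤ := J.erase j₀ with hK
  have hKJ : K ⊆ J := Finset.erase_subset _ _
  have hKne : K ≠ J := by
    intro h
    rw [hK] at h
    exact Finset.notMem_erase j₀ J (by rw [h]; exact hj₀)
  have hrK : Module.finrank ℝ (Submodule.span ℝ (f '' (K : Set ℤ))) = K.card :=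
    span_image_finrank K f (hind K hKJ hKne i)
  have hj₀mem : f j₀ ∈ Submodule.span ℝ (f '' (K : Set ℤ)) := by
    have hsum : a j₀ i • f j₀ + ∑ j ∈ K, a j i • f j = 0 := by
      have h1 : a j₀ i • f j₀ + ∑ j ∈ K, a j i • f j = ∑ j ∈ J, a j i • f j := by
        rw [hK]; exact Finset.add_sum_erase J (fun j => a j i • f j) hj₀
      rw [h1]; exact hrel i
    have ha := hnz j₀ hj₀ i
    have h2 : a j₀ i • f j₀ = -(∑ j ∈ K, a j i • f j) :=
      eq_neg_of_add_eq_zero_left hsum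
    have h3 : f j₀ = (a j₀ i)⁻¹ • (-(∑ j ∈ K, a j i • f j)) := by
      rw [eq_inv_smul_iff₀ ha]; exact h2
    rw [h3]
    refine Submodule.smul_mem _ _ (Submodule.neg_mem _ (Submodule.sum_mem _ ?_))
    intro j hj
    exact Submodule.smul_mem _ _ (Submodule.subset_span ⟨j, hj, rfl⟩)
  have hspanJ : Submodule.span ℝ (f '' (J : Set ℤ)) = Submodule.span ℝ (f '' (K : Set ℤ)) := by
    apply le_antisymm
    · rw [Submodule.span_le]
      rintro _ ⟨j, hj, rfl⟩
      by_cases h : j = j₀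
      · subst h; exact hj₀mem
      · exact Submodule.subset_span ⟨j, Finset.mem_erase.mpr ⟨h, hj⟩, rfl⟩
    · exact Submodule.span_mono (Set.image_mono (by exact_mod_cast hKJ))
  have hKcard : K.card = J.card - 1 := Finset.card_erase_of_mem hj₀
  have hJcard : Jm.card + Jp.card = J.card := by
    rw [← hpart, Finset.card_union_of_disjoint hdisj]
  have hsup : Submodule.span ℝ (f '' (Jm : Set ℤ)) ⊔ Submodule.span ℝ (f '' (Jp : Set ℤ))
      = Submodule.span ℝ (f '' (J : Set ℤ)) := by
    rw [← Submodule.span_union, ← Set.image_union, ← hpart]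
    norm_cast
    rw [Finset.disjUnion_eq_union]
  have hdim := Submodule.finrank_sup_add_finrank_inf_eq
    (Submodule.span ℝ (f '' (Jm : Set ℤ))) (Submodule.span ℝ (f '' (Jp : Set ℤ)))
  rw [hsup, hspanJ, hrK, hrm, hrp, hKcard] at hdim
  have hJ1 : 1 ≤ J.card := Finset.card_pos.mpr ⟨j₀, hj₀⟩
  omega
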